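/- Let ℓ be an odd prime, K an unramified extension of Q_ℓ, M = K(ζ_ℓ), M⁺ = K(ζ_ℓ + ζ_ℓ^{-1}), η = ζ_ℓ − ζ_ℓ^{-1}. Suppose δ ∈ M⁺ satisfies tr_{M/K}(δ·O_M) ⊆ O_K. Then tr_{M/K}(δ·η^{ℓ−2}·O_M) ⊆ ℓ·O_K. -/

import Mathlib

open Polynomial Algebra

set_option maxHeartbeats 1000000
set_option synthInstance.maxHeartbeats 100000

/-- Lemma 3.11: let `ℓ` be an odd prime, `K` an unramified extension of `ℚ_ℓ`
(`ℓ` stays prime in the ring of integers of `K`), `M = K(ζ_ℓ)`,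
`M⁺ = K(ζ_ℓ + ζ_ℓ⁻¹)`, and `η = ζ_ℓ - ζ_ℓ⁻¹`.  If `δ ∈ M⁺` satisfies
`tr_{M/K}(δ·O_M) ⊆ O_K`, then `tr_{M/K}(δ·η^(ℓ-2)·O_M) ⊆ ℓ·O_K`. -/
theorem stmt_9 (ℓ : ℕ) [Fact ℓ.Prime] (hodd : Odd ℓ)
    (K : Type) [Field K] [Algebra ℚ_[ℓ] K] [FiniteDimensional ℚ_[ℓ] K]
    [Algebra ℤ_[ℓ] K] [IsScalarTower ℤ_[ℓ] ℚ_[ℓ] K]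
    (hunram : Prime (algebraMap ℤ_[ℓ] (integralClosure ℤ_[ℓ] K) (ℓ : ℤ_[ℓ])))
    (M : Type) [Field M] [Algebra K M] [FiniteDimensional K M]
    [Algebra ℤ_[ℓ] M] [IsScalarTower ℤ_[ℓ] K M]
    (ζ : M) (hζ : IsPrimitiveRoot ζ ℓ) (hM : Algebra.adjoin K {ζ} = ⊤)
    (δ : M) (hδ : δ ∈ Algebra.adjoin K ({ζ + ζ⁻¹} : Set M))
    (htr : ∀ x ∈ integralClosure ℤ_[ℓ] M,
      Algebra.trace K M (δ * x) ∈ integralClosure ℤ_[ℓ] K) :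
    ∀ x ∈ integralClosure ℤ_[ℓ] M,
      ∃ y ∈ integralClosure ℤ_[ℓ] K,
        Algebra.trace K M (δ * (ζ - ζ⁻¹) ^ (ℓ - 2) * x) = (ℓ : K) * y := by
  classical
  intro x hx
  have hp : ℓ.Prime := Fact.out
  have hℓ2 : ℓ ≠ 2 := by rintro rfl; exact (by decide : ¬ Odd 2) hodd
  have hℓ3 : 3 ≤ ℓ := by have := hp.two_le; omega
  have hℓpos : 0 < ℓ := hp.pos
  -- instances
  haveI : CharZero K := charZero_of_injective_algebraMap (algebraMap ℚ_[ℓ] K).injective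
  haveI : CharZero M := charZero_of_injective_algebraMap (algebraMap K M).injective
  set OK := integralClosure ℤ_[ℓ] K with hOKdef
  set OM := integralClosure ℤ_[ℓ] M with hOMdef
  haveI hfrK : IsFractionRing OK K :=
    integralClosure.isFractionRing_of_finite_extension ℚ_[ℓ] K
  haveI hic : IsIntegrallyClosed OK :=
    integralClosure.isIntegrallyClosedOfFiniteExtension ℚ_[ℓ]
  -- basic facts about ζ
  have hζ0 : ζ ≠ 0 := hζ.ne_zero hℓpos.ne'
  have hζℓ : ζ ^ ℓ = 1 := hζ.pow_eq_one
  have hζmem : ζ ∈ OM := by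
    show IsIntegral ℤ_[ℓ] ζ
    exact ⟨X ^ ℓ - C 1, monic_X_pow_sub_C _ hℓpos.ne', by simp [hζℓ]⟩
  have hζinv_eq : ζ⁻¹ = ζ ^ (ℓ - 1) := by
    have hmul : ζ ^ (ℓ - 1) * ζ = 1 := by
      rw [← pow_succ, show ℓ - 1 + 1 = ℓ by omega, hζℓ]
    exact inv_eq_of_mul_eq_one_left hmul
  have hζinvmem : ζ⁻¹ ∈ OM := by rw [hζinv_eq]; exact pow_mem hζmem _
  have hηmem : ζ - ζ⁻¹ ∈ OM := sub_mem hζmem hζinvmem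
  -- the Eisenstein polynomial over OK
  have hℓOK : (ℓ : OK) = algebraMap ℤ_[ℓ] OK (ℓ : ℤ_[ℓ]) := by simp
  have hprime : Prime ((ℓ : ℕ) : OK) := by rw [hℓOK]; exact hunram
  have h𝓟prime : (Ideal.span {((ℓ : ℕ) : OK)}).IsPrime :=
    (Ideal.span_singleton_prime hprime.ne_zero).2 hprime
  set qZ : ℤ[X] := (cyclotomic ℓ ℤ).comp (X + 1) with hqZ
  have hqZmonic : qZ.Monic := by
    rw [hqZ, show (X + 1 : ℤ[X]) = X + C 1 by simp]
    exact (cyclotomic.monic ℓ ℤ).comp_X_add_C 1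
  have hqZdeg : qZ.natDegree = ℓ - 1 := by
    rw [hqZ, natDegree_comp, show (X + 1 : ℤ[X]) = X + C 1 by simp, natDegree_X_add_C,
      natDegree_cyclotomic, Nat.totient_prime hp, mul_one]
  set qO : OK[X] := qZ.map (Int.castRingHom OK) with hqO
  have hqOmonic : qO.Monic := hqZmonic.map _
  have hqOdeg : qO.natDegree = ℓ - 1 := by
    rw [hqO, hqZmonic.natDegree_map, hqZdeg]
  have heiZ := cyclotomic_comp_X_add_one_isEisensteinAt ℓ
  have hq0 : qZ.coeff 0 = ℓ := by
    rw [hqZ, coeff_zero_eq_eval_zero, eval_comp]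
    simp [eval_one_cyclotomic_prime]
  have heiO : qO.IsEisensteinAt (Ideal.span {((ℓ : ℕ) : OK)}) := by
    constructor
    · rw [hqOmonic.leadingCoeff]
      exact fun h => h𝓟prime.ne_top (Ideal.eq_top_of_isUnit_mem _ h isUnit_one)
    · intro n hn
      rw [hqO, coeff_map]
      have hn' : n < qZ.natDegree := by rwa [hqOdeg, ← hqZdeg] at hn
      have hmem := heiZ.mem hn'
      rw [Ideal.submodule_span_eq, Ideal.mem_span_singleton] at hmem
      obtain ⟨c, hc⟩ := hmem
      rw [Ideal.mem_span_singleton]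
      exact ⟨(Int.castRingHom OK) c, by rw [hc, map_mul, map_natCast]⟩
    · rw [hqO, coeff_map, hq0]
      rw [Ideal.span_singleton_pow, Ideal.mem_span_singleton]
      rintro ⟨c, hc⟩
      rw [map_natCast] at hc
      apply hprime.not_isUnit
      have hℓne : ((ℓ : ℕ) : OK) ≠ 0 := hprime.ne_zero
      have h2 : ((ℓ : ℕ) : OK) * 1 = ((ℓ : ℕ) : OK) * (((ℓ : ℕ) : OK) * c) := by
        linear_combination hc
      exact IsUnit.of_mul_eq_one _ (mul_left_cancel₀ hℓne h2).symm
  have hirrO : Irreducible qO :=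
    heiO.irreducible h𝓟prime hqOmonic.isPrimitive (by rw [hqOdeg]; omega)
  -- irreducibility over K and the minimal polynomials
  have hqmapeq : qO.map (algebraMap OK K) = (cyclotomic ℓ K).comp (X + 1) := by
    rw [hqO, Polynomial.map_map]
    have : (algebraMap OK K).comp (Int.castRingHom OK) = Int.castRingHom K :=
      RingHom.ext_int _ _
    rw [this, hqZ, Polynomial.map_comp, map_cyclotomic]
    simp
  have hirrK : Irreducible ((cyclotomic ℓ K).comp (X + 1)) := by
    rw [← hqmapeq]
    exact (hqOmonic.irreducible_iff_irreducible_map_fraction_map).1 hirrO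
  have haevalsub : aeval (ζ - 1) ((cyclotomic ℓ K).comp (X + 1)) = 0 := by
    rw [aeval_comp]
    simp only [map_add, aeval_X, aeval_one, sub_add_cancel]
    have : aeval ζ (cyclotomic ℓ K) = eval ζ (cyclotomic ℓ M) := by
      rw [aeval_def, eval₂_eq_eval_map, map_cyclotomic]
    rw [this, (hζ.isRoot_cyclotomic hℓpos).eq_zero]
  have hminsub : minpoly K (ζ - 1) = (cyclotomic ℓ K).comp (X + 1) := by
    refine (minpoly.eq_of_irreducible_of_monic hirrK haevalsub ?_).symm
    rw [show (X + 1 : K[X]) = X + C 1 by simp]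
    exact (cyclotomic.monic ℓ K).comp_X_add_C 1
  have hminζ : minpoly K ζ = cyclotomic ℓ K := by
    have h1 : ζ = (ζ - 1) + algebraMap K M 1 := by simp
    rw [h1, minpoly.add_algebraMap, hminsub, comp_assoc]
    simp
  have hζKint : IsIntegral K ζ := IsIntegral.of_finite K ζ
  have hirrcyc : Irreducible (cyclotomic ℓ K) := hminζ ▸ minpoly.irreducible hζKint
  -- cyclotomic extension instance
  set pn : ℕ+ := ⟨ℓ, hℓpos⟩ with hpn
  haveI : Fact ((pn : ℕ).Prime) := ⟨hp⟩
  haveI hcycext : IsCyclotomicExtension {(pn : ℕ)} K M := by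
    constructor
    · rintro n hn -
      rw [Set.mem_singleton_iff] at hn
      subst hn
      exact ⟨ζ, hζ⟩
    · intro z
      have : (⊤ : Subalgebra K M) ≤ Algebra.adjoin K {b : M | ∃ n : ℕ, n ∈ ({(pn : ℕ)} : Set ℕ) ∧ n ≠ 0 ∧ b ^ n = 1} := by
        rw [← hM]
        apply Algebra.adjoin_mono
        rintro w rfl
        exact ⟨pn, rfl, hℓpos.ne', hζℓ⟩
      exact this trivial
  have hζ' : IsPrimitiveRoot ζ ((pn : ℕ)) := hζ
  -- every integral element is in OK[ζ]
  have hOMadj : ∀ z : M, z ∈ OM → z ∈ Algebra.adjoin OK ({ζ} : Set M) := by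
    intro z hz
    have hzOK : IsIntegral OK z := IsIntegral.tower_top (A := OK) hz
    have hζOK : IsIntegral OK ζ := IsIntegral.tower_top (A := OK) hζmem
    set B := hζ'.powerBasis K with hB
    have hBgen : B.gen = ζ := hζ'.powerBasis_gen K
    have hBint : IsIntegral OK B.gen := by rw [hBgen]; exact hζOK
    have H := discr_mul_isIntegral_mem_adjoin (R := OK) (K := K) (L := M) hBint hzOK
    rw [hBgen] at H
    have hdiscr := IsCyclotomicExtension.discr_odd_prime (K := K) (L := M) hζ' hirrcyc
      (by intro h; apply hℓ2; exact h)
    rw [hdiscr] at H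
    -- clean up the sign
    have hsm : ∀ (a : OK) (w : M), w ∈ Algebra.adjoin OK ({ζ} : Set M) →
        (algebraMap OK K a) • w ∈ Algebra.adjoin OK ({ζ} : Set M) := by
      intro a w hw
      rw [algebraMap_smul]
      exact Subalgebra.smul_mem _ hw a
    have H2 := hsm ((-1) ^ (((pn : ℕ) - 1) / 2)) _ H
    rw [map_pow, map_neg, map_one, smul_smul, ← mul_assoc, ← pow_add, ← two_mul,
      pow_mul, neg_one_sq, one_pow, one_mul] at H2
    have hcast : ((pn : K) : K) ^ ((pn : ℕ) - 2) • z = (((ℓ : ℕ) : OK) ^ (ℓ - 2)) • z := by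
      rw [← algebraMap_smul (R := OK) K (((ℓ : ℕ) : OK) ^ (ℓ - 2)) z, map_pow, map_natCast]
      rfl
    rw [hcast] at H2
    -- now apply the Eisenstein criterion machinery
    have hadj : Algebra.adjoin OK ({ζ} : Set M) = Algebra.adjoin OK ({ζ - 1} : Set M) := by
      apply le_antisymm
      · rw [Algebra.adjoin_le_iff, Set.singleton_subset_iff]
        have h1 : ζ - 1 ∈ Algebra.adjoin OK ({ζ - 1} : Set M) :=
          Algebra.subset_adjoin rfl
        have := add_mem h1 (one_mem _)
        simpa using this
      · rw [Algebra.adjoin_le_iff, Set.singleton_subset_iff]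
        exact sub_mem (Algebra.subset_adjoin rfl) (one_mem _)
    set B' := hζ'.subOnePowerBasis K with hB'
    have hB'gen : B'.gen = ζ - 1 := rfl
    have hB'int : IsIntegral OK B'.gen := by
      rw [hB'gen]; exact hζOK.sub isIntegral_one
    have hminO : minpoly OK (ζ - 1) = qO := by
      have hmap : minpoly K (ζ - 1) = (minpoly OK (ζ - 1)).map (algebraMap OK K) :=
        minpoly.isIntegrallyClosed_eq_field_fractions' K (hζOK.sub isIntegral_one)
      have h2 : (minpoly OK (ζ - 1)).map (algebraMap OK K) = qO.map (algebraMap OK K) := by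
        rw [← hmap, hminsub, hqmapeq]
      exact Polynomial.map_injective _ (IsFractionRing.injective OK K) h2
    have heiB : (minpoly OK B'.gen).IsEisensteinAt
        (Submodule.span OK {((ℓ : ℕ) : OK)}) := by
      rw [hB'gen, hminO]
      exact heiO
    have hfin := mem_adjoin_of_smul_prime_pow_smul_of_minpoly_isEisensteinAt
      (B := B') hprime hB'int hzOK (n := ℓ - 2) (by rw [hB'gen, ← hadj]; exact H2) heiB
    rw [hB'gen, ← hadj] at hfin
    exact hfin
  -- the automorphism σ : ζ ↦ ζ⁻¹
  have haevalinv : aeval ζ⁻¹ (minpoly K ζ) = 0 := by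
    rw [hminζ]
    have : aeval ζ⁻¹ (cyclotomic ℓ K) = eval ζ⁻¹ (cyclotomic ℓ M) := by
      rw [aeval_def, eval₂_eq_eval_map, map_cyclotomic]
    rw [this, ((hζ.inv).isRoot_cyclotomic hℓpos).eq_zero]
  set pb := hζ'.powerBasis K with hpb
  have hpbgen : pb.gen = ζ := hζ'.powerBasis_gen K
  set σ : M →ₐ[K] M := pb.lift ζ⁻¹ (by rw [hpbgen]; exact haevalinv) with hσ
  have hσζ : σ ζ = ζ⁻¹ := by
    conv_lhs => rw [← hpbgen]
    exact pb.lift_gen _ _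
  set e : M ≃ₐ[K] M := AlgEquiv.ofBijective σ (Algebra.IsAlgebraic.algHom_bijective σ) with he
  have heζ : e ζ = ζ⁻¹ := hσζ
  have heζinv : e ζ⁻¹ = ζ := by rw [map_inv₀, heζ, inv_inv]
  have heδ : e δ = δ := by
    refine Algebra.adjoin_induction ?_ ?_ ?_ ?_ hδ
    · rintro w rfl
      rw [map_add, heζ, heζinv]; ring
    · intro r; exact e.commutes r
    · intro a b _ _ ha hb; rw [map_add, ha, hb]
    · intro a b _ _ ha hb; rw [map_mul, ha, hb]
  have heη : e (ζ - ζ⁻¹) = -(ζ - ζ⁻¹) := by rw [map_sub, heζ, heζinv]; ring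
  have heint : ∀ z : M, z ∈ OM → e z ∈ OM := by
    intro z hz
    exact IsIntegral.map (AlgHom.restrictScalars ℤ_[ℓ] (e : M →ₐ[K] M)) hz
  -- e applied to polynomials in ζ over OK
  have healg : ∀ a : OK, e (algebraMap OK M a) = algebraMap OK M a := by
    intro a
    rw [Subalgebra.algebraMap_eq]
    exact e.commutes _
  have heaeval : ∀ P : OK[X], e (aeval ζ P) = aeval ζ⁻¹ P := by
    intro P
    induction P using Polynomial.induction_on' with
    | add p q hp hq => simp only [map_add]; rw [hp, hq]
    | monomial n a =>
      rw [aeval_monomial, aeval_monomial, map_mul, map_pow, heζ, healg]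
  -- divisibility of ζ^n - ζ⁻ⁿ by η
  have hdivpow : ∀ n : ℕ, ∃ c ∈ OM, ζ ^ n - (ζ⁻¹) ^ n = (ζ - ζ⁻¹) * c := by
    intro n
    refine ⟨ζ * (ζ⁻¹) ^ n * (∑ m ∈ Finset.range n, (ζ ^ 2) ^ m), ?_, ?_⟩
    · exact mul_mem (mul_mem hζmem (pow_mem hζinvmem n))
        (sum_mem fun m _ => pow_mem (pow_mem hζmem 2) m)
    · have hg := geom_sum_mul (ζ ^ 2) n
      have hinv : ζ * ζ⁻¹ = 1 := mul_inv_cancel₀ hζ0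
      calc ζ ^ n - (ζ⁻¹) ^ n
          = ((ζ ^ 2) ^ n - 1) * (ζ⁻¹) ^ n := by
            rw [← pow_mul, sub_mul, one_mul, two_mul, pow_add, mul_assoc, ← mul_pow, hinv,
              one_pow, mul_one]
        _ = (∑ m ∈ Finset.range n, (ζ ^ 2) ^ m) * (ζ ^ 2 - 1) * (ζ⁻¹) ^ n := by rw [hg]
        _ = (ζ - ζ⁻¹) * (ζ * (ζ⁻¹) ^ n * (∑ m ∈ Finset.range n, (ζ ^ 2) ^ m)) := by
            have : (ζ - ζ⁻¹) * ζ = ζ ^ 2 - 1 := by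
              rw [sub_mul, sq, mul_comm ζ⁻¹ ζ, hinv]
            rw [← this]; ring
  have hdiff : ∀ P : OK[X], ∃ c ∈ OM, aeval ζ P - aeval ζ⁻¹ P = (ζ - ζ⁻¹) * c := by
    intro P
    induction P using Polynomial.induction_on' with
    | add p q hp hq =>
      obtain ⟨c1, hc1, h1⟩ := hp
      obtain ⟨c2, hc2, h2⟩ := hq
      exact ⟨c1 + c2, add_mem hc1 hc2, by rw [map_add, map_add, mul_add, ← h1, ← h2]; ring⟩
    | monomial n a =>
      obtain ⟨c, hc, hcq⟩ := hdivpow n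
      have hamem : algebraMap OK M a ∈ OM := by
        have ha' : IsIntegral ℤ_[ℓ] (OK.val a) := a.2
        have h2 : IsIntegral ℤ_[ℓ] (algebraMap K M (OK.val a)) := ha'.algebraMap
        exact h2
      refine ⟨algebraMap OK M a * c, mul_mem hamem hc, ?_⟩
      rw [aeval_monomial, aeval_monomial, ← mul_sub, hcq]; ring
  -- the product formula : ∏ (1 - μ) over nontrivial ℓ-th roots of unity equals ℓ
  set S : Finset M := (Polynomial.nthRootsFinset ℓ (1 : M)).erase 1 with hS
  have hprod : ∏ μ ∈ S, (1 - μ) = (ℓ : M) := by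
    have hXl : (X ^ ℓ - 1 : M[X]) = ∏ μ ∈ Polynomial.nthRootsFinset ℓ (1 : M), (X - C μ) :=
      X_pow_sub_one_eq_prod hℓpos hζ
    have hone : (1 : M) ∈ Polynomial.nthRootsFinset ℓ (1 : M) :=
      (Polynomial.mem_nthRootsFinset hℓpos (1 : M)).2 (one_pow ℓ)
    have hsplit : ∏ μ ∈ Polynomial.nthRootsFinset ℓ (1 : M), (X - C μ : M[X]) =
        (X - 1) * ∏ μ ∈ S, (X - C μ) := by
      rw [hS, ← Finset.mul_prod_erase _ _ hone, map_one]
    have hgeom : (X - 1 : M[X]) * ∑ i ∈ Finset.range ℓ, X ^ i = X ^ ℓ - 1 := by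
      have := geom_sum_mul (X : M[X]) ℓ
      linear_combination this
    have hne : (X - 1 : M[X]) ≠ 0 := by
      rw [show (X - 1 : M[X]) = X - C 1 by simp]
      exact X_sub_C_ne_zero 1
    have hcancel : (∑ i ∈ Finset.range ℓ, X ^ i : M[X]) = ∏ μ ∈ S, (X - C μ) := by
      apply mul_left_cancel₀ hne
      rw [hgeom, hXl, hsplit]
    have hev := congrArg (eval 1) hcancel
    rw [eval_finset_sum, eval_prod] at hev
    simp only [eval_pow, eval_X, one_pow, Finset.sum_const, Finset.card_range,
      nsmul_eq_mul, mul_one, eval_sub, eval_one, eval_C] at hev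
    rw [← hev]
  have hScard : S.card = ℓ - 1 := by
    rw [hS, Finset.card_erase_of_mem ((Polynomial.mem_nthRootsFinset hℓpos (1 : M)).2 (one_pow ℓ)),
      hζ.card_nthRootsFinset]
  -- each 1 - μ divides 1 - ζ with integral quotient
  haveI : NeZero ℓ := ⟨hℓpos.ne'⟩
  have hschoice : ∀ μ ∈ S, ∃ s, s ∈ OM ∧ (1 - ζ) = (1 - μ) * s := by
    intro μ hμ
    have hμ1 : μ ≠ 1 := (Finset.mem_erase.1 hμ).1
    have hμpow : μ ^ ℓ = 1 :=
      (Polynomial.mem_nthRootsFinset hℓpos (1 : M)).1 (Finset.mem_erase.1 hμ).2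
    obtain ⟨i, hik, rfl⟩ := hζ.eq_pow_of_pow_eq_one hμpow
    have hizero : ¬ (ℓ ∣ i) := by
      intro hdvd
      exact hμ1 ((hζ.pow_eq_one_iff_dvd i).2 hdvd)
    have hIne : ((i : ZMod ℓ)) ≠ 0 := by
      rwa [Ne, ZMod.natCast_eq_zero_iff]
    set j : ℕ := ((i : ZMod ℓ)⁻¹).val with hj
    have hij : (ζ ^ i) ^ j = ζ := by
      rw [← pow_mul]
      have hcast : ((i * j : ℕ) : ZMod ℓ) = ((1 : ℕ) : ZMod ℓ) := by
        push_cast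
        rw [hj, ZMod.natCast_val, ZMod.cast_id]
        exact mul_inv_cancel₀ hIne
      have hmodeq : (i * j) % ℓ = 1 % ℓ := (ZMod.natCast_eq_natCast_iff _ _ _).1 hcast
      have hmod : (i * j) % ℓ = 1 := by
        rwa [Nat.mod_eq_of_lt (show 1 < ℓ by omega)] at hmodeq
      have hdecomp : i * j = ℓ * (i * j / ℓ) + 1 := by
        conv_lhs => rw [← Nat.div_add_mod (i * j) ℓ]
        rw [hmod]
      rw [hdecomp, pow_add, pow_mul, hζℓ, one_pow, one_mul, pow_one]
    refine ⟨∑ m ∈ Finset.range j, (ζ ^ i) ^ m, sum_mem fun m _ => pow_mem (pow_mem hζmem i) m, ?_⟩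
    have hg := geom_sum_mul (ζ ^ i) j
    rw [hij] at hg
    linear_combination hg
  choose sfun hsmem hseq using hschoice
  have hprodpow : (1 - ζ) ^ (ℓ - 1) = (ℓ : M) * ∏ μ ∈ S.attach, sfun μ.1 μ.2 := by
    calc (1 - ζ) ^ (ℓ - 1) = ∏ _μ ∈ S.attach, (1 - ζ) := by
          simp [Finset.prod_const, hScard]
      _ = ∏ μ ∈ S.attach, ((1 - μ.1) * sfun μ.1 μ.2) :=
          Finset.prod_congr rfl (fun μ _ => hseq μ.1 μ.2)
      _ = (∏ μ ∈ S.attach, (1 - μ.1)) * ∏ μ ∈ S.attach, sfun μ.1 μ.2 :=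
          Finset.prod_mul_distrib
      _ = (∏ μ ∈ S, (1 - μ)) * ∏ μ ∈ S.attach, sfun μ.1 μ.2 := by
          rw [Finset.prod_attach S (fun μ => 1 - μ)]
      _ = (ℓ : M) * ∏ μ ∈ S.attach, sfun μ.1 μ.2 := by rw [hprod]
  have hsprodmem : ∏ μ ∈ S.attach, sfun μ.1 μ.2 ∈ OM :=
    prod_mem fun μ _ => hsmem μ.1 μ.2
  -- η ^ (ℓ - 1) = ℓ * u with u ∈ OM
  have hevenl1 : Even (ℓ - 1) := Nat.Odd.sub_odd hodd odd_one
  have hufact : ∃ u ∈ OM, (ζ - ζ⁻¹) ^ (ℓ - 1) = (ℓ : M) * u := by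
    refine ⟨(∏ μ ∈ S.attach, sfun μ.1 μ.2) * ((ζ⁻¹) ^ (ℓ - 1) * (ζ + 1) ^ (ℓ - 1)),
      mul_mem hsprodmem (mul_mem (pow_mem hζinvmem _) (pow_mem (add_mem hζmem (one_mem _)) _)), ?_⟩
    have hfac : ζ - ζ⁻¹ = ζ⁻¹ * ((ζ - 1) * (ζ + 1)) := by
      have hinv : ζ * ζ⁻¹ = 1 := mul_inv_cancel₀ hζ0
      linear_combination (-ζ) * hinv
    rw [hfac, mul_pow, mul_pow, show (ζ - 1) ^ (ℓ - 1) = (1 - ζ) ^ (ℓ - 1) by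
      rw [show (ζ - 1 : M) = -(1 - ζ) by ring, hevenl1.neg_pow], hprodpow]
    ring
  obtain ⟨u, humem, hueq⟩ := hufact
  -- final assembly
  obtain ⟨P, hP⟩ : ∃ P : OK[X], aeval ζ P = x := by
    have := hOMadj x hx
    rw [Algebra.adjoin_singleton_eq_range_aeval] at this
    obtain ⟨P, hP⟩ := this
    exact ⟨P, hP⟩
  obtain ⟨c, hcmem, hceq⟩ := hdiff P
  have hex : x - e x = (ζ - ζ⁻¹) * c := by
    rw [← hP, heaeval P]
    exact hceq
  have hodd2 : Odd (ℓ - 2) := Nat.Odd.sub_even (by omega) hodd even_two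
  set T := Algebra.trace K M with hT
  set η := ζ - ζ⁻¹ with hηdef
  have h1 : T (δ * η ^ (ℓ - 2) * (e x)) = - T (δ * η ^ (ℓ - 2) * x) := by
    have he1 : e (δ * η ^ (ℓ - 2) * x) = -(δ * η ^ (ℓ - 2) * e x) := by
      rw [map_mul, map_mul, map_pow, heδ, heη, hodd2.neg_pow]
      ring
    have h0 := Algebra.trace_eq_of_algEquiv e (δ * η ^ (ℓ - 2) * x)
    rw [he1, map_neg, ← hT] at h0
    linear_combination -h0
  have h2 : (2 : K) * T (δ * η ^ (ℓ - 2) * x) = T (δ * η ^ (ℓ - 2) * (x - e x)) := by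
    rw [mul_sub (δ * η ^ (ℓ - 2)), map_sub, h1]
    ring
  have h3 : δ * η ^ (ℓ - 2) * (x - e x) = (ℓ : M) * (δ * (u * c)) := by
    rw [hex]
    have hpowstep : η ^ (ℓ - 2) * η = η ^ (ℓ - 1) := by
      rw [← pow_succ, show ℓ - 2 + 1 = ℓ - 1 by omega]
    calc δ * η ^ (ℓ - 2) * (η * c) = δ * (η ^ (ℓ - 2) * η) * c := by ring
      _ = δ * η ^ (ℓ - 1) * c := by rw [hpowstep]
      _ = (ℓ : M) * (δ * (u * c)) := by rw [hueq]; ring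
  have hsmul : ∀ w : M, T ((ℓ : M) * w) = (ℓ : K) * T w := by
    intro w
    rw [show ((ℓ : ℕ) : M) = algebraMap K M ((ℓ : ℕ) : K) by rw [map_natCast],
      ← Algebra.smul_def, map_smul, smul_eq_mul]
  have h5 : (2 : K) * T (δ * η ^ (ℓ - 2) * x) = (ℓ : K) * T (δ * (u * c)) := by
    rw [h2, h3, hsmul]
  have hz0 : T (δ * (u * c)) ∈ OK := htr (u * c) (mul_mem humem hcmem)
  have hz1 : T (δ * η ^ (ℓ - 2) * x) ∈ OK := by
    rw [show δ * η ^ (ℓ - 2) * x = δ * (η ^ (ℓ - 2) * x) by ring]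
    exact htr _ (mul_mem (pow_mem hηmem _) hx)
  obtain ⟨a, b, hab⟩ : IsCoprime (2 : ℤ) ((ℓ : ℕ) : ℤ) := by
    have h2 : IsCoprime ((2 : ℕ) : ℤ) ((ℓ : ℕ) : ℤ) :=
      Nat.isCoprime_iff_coprime.mpr (Nat.coprime_two_left.2 hodd)
    exact_mod_cast h2
  have habK : (a : K) * 2 + (b : K) * ((ℓ : ℕ) : K) = 1 := by
    have h2 : ((a * 2 + b * ((ℓ : ℕ) : ℤ) : ℤ) : K) = ((1 : ℤ) : K) := by rw [hab]
    push_cast at h2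
    exact h2
  refine ⟨a • T (δ * (u * c)) + b • T (δ * η ^ (ℓ - 2) * x),
    add_mem (zsmul_mem hz0 a) (zsmul_mem hz1 b), ?_⟩
  simp only [zsmul_eq_mul]
  linear_combination (a : K) * h5 - T (δ * η ^ (ℓ - 2) * x) * habK
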